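/- For every positive integer n, the n-th letter of the infinite word γ^ω(0) (the fixed point of the morphism γ(i) = 0·(i+1) starting from 0) equals ν₂(n), the exponent of the highest power of 2 dividing n. -/

import Mathlib

/-- The morphism γ : ℕ* → ℕ* with γ(i) = 0·(i+1), applied letterwise to a word. -/
def gammaW (w : List ℕ) : List ℕ := (w.map fun i => [0, i + 1]).flatten

/-- The infinite word γ^ω(0), as a function giving the letter at (0-indexed) position `n`.
Since γ(0) = 0·1 begins with 0, each γ^m(0) is a prefix of γ^(m+1)(0), and γ^(n+1)(0)
has length 2^(n+1) > n, so its `n`-th letter is the `n`-th letter of γ^ω(0). -/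
def gammaOmega : ℕ → ℕ := fun n => (gammaW^[n + 1] [0]).getD n 0

lemma gammaW_cons (a : ℕ) (w : List ℕ) :
    gammaW (a :: w) = 0 :: (a + 1) :: gammaW w := by
  simp [gammaW]

lemma gammaW_length (w : List ℕ) : (gammaW w).length = 2 * w.length := by
  induction w with
  | nil => simp [gammaW]
  | cons a w ih => simp [gammaW_cons, ih]; ring

lemma gammaW_getD_even (w : List ℕ) (j : ℕ) : (gammaW w).getD (2 * j) 0 = 0 := by
  induction w generalizing j with
  | nil => simp [gammaW]
  | cons a w ih =>
    rw [gammaW_cons]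
    cases j with
    | zero => simp
    | succ j =>
      have : 2 * (j + 1) = (2 * j) + 1 + 1 := by ring
      rw [this]
      simpa using ih j

lemma gammaW_getD_odd (w : List ℕ) (j : ℕ) (hj : j < w.length) :
    (gammaW w).getD (2 * j + 1) 0 = (w.getD j 0) + 1 := by
  induction w generalizing j with
  | nil => simp at hj
  | cons a w ih =>
    rw [gammaW_cons]
    cases j with
    | zero => simp
    | succ j =>
      have : 2 * (j + 1) + 1 = (2 * j + 1) + 1 + 1 := by ring
      rw [this]
      simpa using ih j (by simpa using Nat.lt_of_succ_lt_succ hj)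

lemma gammaW_iter_length (m : ℕ) : (gammaW^[m] [0]).length = 2 ^ m := by
  induction m with
  | zero => simp
  | succ m ih =>
    rw [Function.iterate_succ_apply', gammaW_length, ih, pow_succ, Nat.mul_comm]

lemma gammaW_iter_getD (m k : ℕ) (hk : k < 2 ^ m) :
    (gammaW^[m] [0]).getD k 0 = padicValNat 2 (k + 1) := by
  induction m generalizing k with
  | zero =>
    interval_cases k
    simp
  | succ m ih =>
    rw [Function.iterate_succ_apply']
    rcases Nat.even_or_odd k with ⟨j, hj⟩ | ⟨j, hj⟩
    · subst hj
      rw [show j + j = 2 * j by ring, gammaW_getD_even]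
      have hodd : Odd (2 * j + 1) := odd_two_mul_add_one j
      rw [padicValNat.eq_zero_of_not_dvd]
      simpa using hodd.not_two_dvd_nat
    · subst hj
      have hj' : j < 2 ^ m := by
        have := hk
        rw [pow_succ] at this
        omega
      rw [gammaW_getD_odd _ j (by rw [gammaW_iter_length]; exact hj'), ih j hj']
      have h2 : 2 * j + 1 + 1 = 2 * (j + 1) := by ring
      rw [h2, padicValNat.mul (by norm_num) (by omega), padicValNat.self (by norm_num)]
      omega

/-- For every positive integer `n`, the `n`-th letter (1-indexed) of γ^ω(0) equals
ν₂(n), the exponent of the highest power of 2 dividing `n`. -/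
theorem gammaOmega_eq_ruler (n : ℕ) (hn : 0 < n) :
    gammaOmega (n - 1) = padicValNat 2 n := by
  have h := gammaW_iter_getD (n - 1 + 1) (n - 1)
    (lt_of_lt_of_le (Nat.lt_two_pow_self (n := n - 1)) (Nat.pow_le_pow_right (by norm_num) (by omega)))
  rw [gammaOmega, h, Nat.sub_add_cancel hn]
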